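/- arXiv:1709.02528 — 4 statements merged into one kernel-verified Lean document; each statement's English description precedes it below -/
import Mathlib

section
/- Let N and M be positive integers, let A₁, …, A_M ∈ ℂ^{N×N} be Hermitian positive definite matrices, and let B₁, …, B_M ∈ ℂ^{N×N} be Hermitian matrices. Fix an index n with 1 ≤ n ≤ M. Then on the convex set S = { s ∈ ℝ : A_m + s·B_m is positive definite for every m = 1, …, M }, the function f_n(s) = log₂ ( Σ_{t=1}^M ( det((A_n + A_t) + s·(B_n + B_t)) )^{-1} ) is convex. -/
open Matrix Real
open scoped ComplexOrder

lemma detre {n:ℕ} {Z : Matrix (Fin n) (Fin n) ℂ} (h : Z.PosDef) :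
    0 < Z.det.re ∧ Z.det = (Z.det.re : ℂ) := by
  have := h.det_pos
  rw [Complex.lt_def] at this
  refine ⟨this.1, Complex.ext ?_ ?_⟩ <;> simp [this.2.symm]

open scoped MatrixOrder in
lemma det_rpow_combo {n : ℕ} {X Y : Matrix (Fin n) (Fin n) ℂ} (hX : X.PosDef) (hY : Y.PosDef)
    {a b : ℝ} (ha : 0 ≤ a) (hb : 0 ≤ b) (hab : a + b = 1) :
    X.det.re ^ a * Y.det.re ^ b ≤ ((a:ℂ) • X + (b:ℂ) • Y).det.re := by
  rcases eq_or_lt_of_le ha with rfl | ha'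
  · rw [zero_add] at hab; subst hab
    simp
  rcases eq_or_lt_of_le hb with rfl | hb'
  · rw [add_zero] at hab; subst hab
    simp
  -- setup
  set L := CFC.sqrt X with hLdef
  have hLL : L * L = X := CFC.sqrt_mul_sqrt_self X hX.posSemidef.nonneg
  have hXLL : X.det = L.det * L.det := by rw [← det_mul, hLL]
  have hLdet : IsUnit L.det :=
    isUnit_of_mul_isUnit_left (hXLL ▸ (Ne.isUnit hX.det_pos.ne'))
  have hLHerm : L.IsHermitian := (CFC.sqrt_nonneg X).posSemidef.1
  have hLinv : (L⁻¹)ᴴ = L⁻¹ := by rw [conjTranspose_nonsing_inv, hLHerm.eq]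
  set M := L⁻¹ * Y * L⁻¹ with hMdef
  have hM : M.PosSemidef := by
    have := hY.posSemidef.mul_mul_conjTranspose_same L⁻¹
    rwa [hLinv] at this
  have hLML : L * M * L = Y := by
    rw [hMdef]
    calc L * (L⁻¹ * Y * L⁻¹) * L = (L * L⁻¹) * Y * (L⁻¹ * L) := by
          simp only [Matrix.mul_assoc]
      _ = Y := by rw [Matrix.mul_nonsing_inv _ hLdet, Matrix.nonsing_inv_mul _ hLdet,
          Matrix.one_mul, Matrix.mul_one]
  have key : (a:ℂ) • X + (b:ℂ) • Y = L * ((a:ℂ) • 1 + (b:ℂ) • M) * L := by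
    rw [Matrix.mul_add, Matrix.add_mul, mul_smul_comm, mul_smul_comm, smul_mul_assoc,
      smul_mul_assoc, Matrix.mul_one, hLL, hLML]
  -- spectral
  set μ := hM.1.eigenvalues with hμdef
  set U := (hM.1.eigenvectorUnitary : Matrix (Fin n) (Fin n) ℂ) with hUdef
  have hUU : U * star U = 1 := (Matrix.mem_unitaryGroup_iff).mp hM.1.eigenvectorUnitary.2
  have spec : (a:ℂ) • 1 + (b:ℂ) • M
      = U * ((a:ℂ) • 1 + (b:ℂ) • diagonal (RCLike.ofReal ∘ μ)) * star U := by
    rw [Matrix.mul_add, Matrix.add_mul]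
    simp only [mul_smul_comm, smul_mul_assoc, Matrix.mul_one, hUU, Matrix.mul_assoc]
    rw [← Matrix.mul_assoc, ← hM.1.spectral_theorem.trans (Unitary.conjStarAlgAut_apply _ _)]
  have hdiag : ((a:ℂ) • 1 + (b:ℂ) • diagonal (RCLike.ofReal ∘ μ) : Matrix (Fin n) (Fin n) ℂ)
      = diagonal (fun i => (a:ℂ) + (b:ℂ) * (μ i)) := by
    ext i j
    rcases eq_or_ne i j with rfl | h
    · simp [Matrix.diagonal_apply_eq, Matrix.one_apply_eq]
    · simp [Matrix.one_apply_ne h, Matrix.diagonal_apply_ne _ h]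
  have det1 : ((a:ℂ) • 1 + (b:ℂ) • M).det = ∏ i, ((a : ℂ) + (b:ℂ) * (μ i : ℂ)) := by
    rw [spec, det_mul_right_comm, hUU, Matrix.one_mul, hdiag, det_diagonal]
  have detY : Y.det = X.det * ∏ i, ((μ i : ℝ) : ℂ) := by
    have h4 : Y.det = L.det * M.det * L.det := by rw [← hLML, det_mul, det_mul]
    rw [h4, hM.1.det_eq_prod_eigenvalues, hXLL, ← hμdef]
    ring_nf
    rfl
  have detC : (((a:ℂ) • X + (b:ℂ) • Y)).det = X.det * ∏ i, ((a:ℂ) + (b:ℂ) * (μ i : ℂ)) := by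
    rw [key, det_mul, det_mul, det1, hXLL]
    ring
  obtain ⟨hdX, hXre⟩ := detre hX
  have hμ : ∀ i, 0 ≤ μ i := hM.eigenvalues_nonneg
  -- real forms
  have detYre : Y.det.re = X.det.re * ∏ i, μ i := by
    rw [detY, hXre, ← Complex.ofReal_prod, ← Complex.ofReal_mul, Complex.ofReal_re]
    simp
  have detCre : (((a:ℂ) • X + (b:ℂ) • Y)).det.re = X.det.re * ∏ i, (a + b * μ i) := by
    rw [detC, hXre]
    have h3 : ∏ i, ((a:ℂ) + (b:ℂ) * (μ i : ℂ)) = ((∏ i, (a + b * μ i) : ℝ) : ℂ) := by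
      push_cast; rfl
    rw [h3, ← Complex.ofReal_mul, Complex.ofReal_re]
    simp
  rw [detCre, detYre]
  have hprodμ : 0 ≤ ∏ i, μ i := Finset.prod_nonneg fun i _ => hμ i
  rw [Real.mul_rpow hdX.le hprodμ, ← mul_assoc, ← Real.rpow_add hdX, hab, Real.rpow_one]
  refine mul_le_mul_of_nonneg_left ?_ hdX.le
  rw [← Real.finset_prod_rpow _ _ (fun i _ => hμ i)]
  refine Finset.prod_le_prod (fun i _ => Real.rpow_nonneg (hμ i) b) fun i _ => ?_
  have := Real.geom_mean_le_arith_mean2_weighted ha hb zero_le_one (hμ i) hab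
  simpa using this

lemma posSemidef_real_smul {n : ℕ} {X : Matrix (Fin n) (Fin n) ℂ} (hX : X.PosSemidef)
    {a : ℝ} (ha : 0 ≤ a) : ((a : ℂ) • X).PosSemidef := by
  rw [posSemidef_iff_dotProduct_mulVec] at hX ⊢
  constructor
  · rw [Matrix.IsHermitian, conjTranspose_smul, hX.1.eq]
    simp
  · intro x
    rw [smul_mulVec, dotProduct_smul]
    rcases eq_or_lt_of_le (hX.2 x) with h | h
    · rw [← h]; simp
    · positivity

lemma posDef_real_smul {n : ℕ} {X : Matrix (Fin n) (Fin n) ℂ} (hX : X.PosDef)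
    {a : ℝ} (ha : 0 < a) : ((a : ℂ) • X).PosDef := by
  rw [posDef_iff_dotProduct_mulVec] at hX ⊢
  refine ⟨?_, fun x hx => ?_⟩
  · rw [Matrix.IsHermitian, conjTranspose_smul, hX.1.eq]; simp
  · rw [smul_mulVec, dotProduct_smul]
    have := hX.2 hx
    positivity

lemma real_smul_eq {n : ℕ} (a : ℝ) (X : Matrix (Fin n) (Fin n) ℂ) : a • X = (a:ℂ) • X := by
  ext i j; simp [Complex.real_smul]

lemma posDef_combo {n : ℕ} {P Q : Matrix (Fin n) (Fin n) ℂ} (hP : P.PosDef) (hQ : Q.PosDef)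
    {a b : ℝ} (ha : 0 ≤ a) (hb : 0 ≤ b) (hab : a + b = 1) : (a • P + b • Q).PosDef := by
  rcases eq_or_lt_of_le ha with rfl | ha'
  · rw [zero_add] at hab; subst hab; simpa using hQ
  · rw [real_smul_eq, real_smul_eq]
    exact (posDef_real_smul hP ha').add_posSemidef (posSemidef_real_smul hQ.posSemidef hb)


/-- with `A₁,…,A_M` Hermitian positive definite and `B₁,…,B_M`
Hermitian, for a fixed index `n`, on the convex set
`S = {s ∈ ℝ : A_m + s·B_m is positive definite for all m}` the function
`f_n(s) = log₂(Σ_t (det((A_n + A_t) + s·(B_n + B_t)))^{-1})` is convex. -/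
theorem log_sum_inv_det_convex (N M : ℕ) (hN : 0 < N) (hM : 0 < M)
    (A B : Fin M → Matrix (Fin N) (Fin N) ℂ)
    (hA : ∀ m, (A m).PosDef) (hB : ∀ m, (B m).IsHermitian) (n : Fin M) :
    ConvexOn ℝ {s : ℝ | ∀ m, (A m + s • B m).PosDef}
      (fun s : ℝ => Real.logb 2
        (∑ t, ((((A n + A t) + s • (B n + B t)).det.re))⁻¹)) := by
  have : Fact (0 < M) := ⟨hM⟩
  have : Nonempty (Fin M) := ⟨⟨0, hM⟩⟩
  have hconv : Convex ℝ {s : ℝ | ∀ m, (A m + s • B m).PosDef} := by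
    intro x hx y hy a b ha hb hab m
    have e : A m + (a • x + b • y) • B m = a • (A m + x • B m) + b • (A m + y • B m) := by
      have hb2 : b = 1 - a := by linarith
      subst hb2; simp only [smul_eq_mul]; module
    rw [Set.mem_setOf_eq] at *
    rw [e]
    exact posDef_combo (hx m) (hy m) ha hb hab
  have hPD : ∀ {s : ℝ}, (∀ m, (A m + s • B m).PosDef) →
      ∀ t, ((A n + A t) + s • (B n + B t)).PosDef := by
    intro s hs t
    have e : (A n + A t) + s • (B n + B t) = (A n + s • B n) + (A t + s • B t) := by module
    rw [e]; exact (hs n).add (hs t)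
  refine ⟨hconv, ?_⟩
  intro x hx y hy a b ha hb hab
  rcases eq_or_lt_of_le ha with rfl | ha'
  · rw [zero_add] at hab; subst hab; simp
  rcases eq_or_lt_of_le hb with rfl | hb'
  · rw [add_zero] at hab; subst hab; simp
  have halt : a < 1 := by linarith
  have hs : (∀ m, (A m + (a • x + b • y) • B m).PosDef) := hconv hx hy ha hb hab
  set g : Fin M → ℝ := fun t => (((A n + A t) + x • (B n + B t)).det.re)⁻¹ with hg
  set h : Fin M → ℝ := fun t => (((A n + A t) + y • (B n + B t)).det.re)⁻¹ with hh
  set d : Fin M → ℝ := fun t => (((A n + A t) + (a • x + b • y) • (B n + B t)).det.re)⁻¹ with hd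
  have gpos : ∀ t, 0 < g t := fun t => inv_pos.2 (detre (hPD hx t)).1
  have hpos : ∀ t, 0 < h t := fun t => inv_pos.2 (detre (hPD hy t)).1
  have dpos : ∀ t, 0 < d t := fun t => inv_pos.2 (detre (hPD hs t)).1
  have step1 : ∀ t, d t ≤ g t ^ a * h t ^ b := by
    intro t
    have e : ((a:ℂ)) • ((A n + A t) + x • (B n + B t)) + ((b:ℂ)) • ((A n + A t) + y • (B n + B t))
        = (A n + A t) + (a • x + b • y) • (B n + B t) := by
      rw [← real_smul_eq, ← real_smul_eq]
      have hb2 : b = 1 - a := by linarith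
      subst hb2; simp only [smul_eq_mul]; module
    have key := det_rpow_combo (hPD hx t) (hPD hy t) ha hb hab
    rw [e] at key
    have hgh : 0 < (((A n + A t) + x • (B n + B t)).det.re) ^ a
        * (((A n + A t) + y • (B n + B t)).det.re) ^ b := by
      have := (detre (hPD hx t)).1; have := (detre (hPD hy t)).1
      positivity
    have := inv_anti₀ hgh key
    rw [mul_inv, ← Real.inv_rpow (detre (hPD hx t)).1.le, ← Real.inv_rpow (detre (hPD hy t)).1.le]
      at this
    exact this
  have hconj : Real.HolderConjugate (1/a) (1/b) := by
    rw [Real.holderConjugate_iff]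
    constructor
    · rw [lt_div_iff₀ ha']; linarith
    · rw [one_div, inv_inv, one_div, inv_inv]; exact hab
  have holder := Real.inner_le_Lp_mul_Lq Finset.univ (fun t => g t ^ a) (fun t => h t ^ b) hconj
  have habs : ∀ (u : ℝ) (c : ℝ), 0 < u → 0 < c → |u ^ c| ^ (1/c) = u := by
    intro u c hu hc
    rw [abs_of_nonneg (Real.rpow_nonneg hu.le c), ← Real.rpow_mul hu.le,
      mul_one_div_cancel hc.ne', Real.rpow_one]
  rw [Finset.sum_congr rfl (fun t _ => habs (g t) a (gpos t) ha'),
    Finset.sum_congr rfl (fun t _ => habs (h t) b (hpos t) hb'),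
    one_div_one_div, one_div_one_div] at holder
  have step2 : ∑ t, d t ≤ (∑ t, g t) ^ a * (∑ t, h t) ^ b :=
    le_trans (Finset.sum_le_sum fun t _ => step1 t) holder
  have sgpos : 0 < ∑ t, g t := Finset.sum_pos (fun t _ => gpos t) Finset.univ_nonempty
  have shpos : 0 < ∑ t, h t := Finset.sum_pos (fun t _ => hpos t) Finset.univ_nonempty
  have sdpos : 0 < ∑ t, d t := Finset.sum_pos (fun t _ => dpos t) Finset.univ_nonempty
  calc Real.logb 2 (∑ t, d t) ≤ Real.logb 2 ((∑ t, g t) ^ a * (∑ t, h t) ^ b) :=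
        Real.logb_le_logb_of_le one_lt_two sdpos step2
    _ = a * Real.logb 2 (∑ t, g t) + b * Real.logb 2 (∑ t, h t) := by
        rw [Real.logb_mul (Real.rpow_pos_of_pos sgpos a).ne' (Real.rpow_pos_of_pos shpos b).ne',
          Real.logb_rpow_eq_mul_logb_of_pos sgpos, Real.logb_rpow_eq_mul_logb_of_pos shpos]
    _ = a • Real.logb 2 (∑ t, g t) + b • Real.logb 2 (∑ t, h t) := by
        simp [smul_eq_mul]
end

section
/- (Proposition 2.) Let N_R, N_S, M be positive integers, let σ² > 0 and ρ > 0 be reals, and for each n ∈ {1, …, M} and i ∈ {1, …, N_S} let g_{n,i} ∈ ℂ^{N_R} be a fixed vector. For a vector λ ∈ ℝ^{M·N_S} with components λ_{n,i}, define Σ_n(λ) = σ²·I_{N_R} + (ρ/N_S) · Σ_{i=1}^{N_S} λ_{n,i} · g_{n,i} g_{n,i}^*, and define R_LB(λ) = log₂ M − N_R·log₂(e·σ²) − (1/M) Σ_{n=1}^M log₂ ( Σ_{t=1}^M ( det(Σ_n(λ) + Σ_t(λ)) )^{-1} ). Then R_LB is a concave function of λ on the nonnegative orthant { λ ∈ ℝ^{M·N_S}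 : λ_{n,i} ≥ 0 for all n, i }. -/
open Matrix Real
open scoped ComplexOrder

section Aux

lemma posDef_conj_of_isUnit {n : Type*} [Fintype n] [DecidableEq n]
    {C A : Matrix n n ℂ} (hA : A.PosDef) (hC : IsUnit C.det) :
    (Cᴴ * A * C).PosDef := by
  refine Matrix.PosDef.of_dotProduct_mulVec_pos (Matrix.isHermitian_conjTranspose_mul_mul C hA.1) fun x hx => ?_
  have hCx : C *ᵥ x ≠ 0 := by
    intro h
    exact hx ((Matrix.mulVec_injective_iff_isUnit.mpr
      (Matrix.isUnit_iff_isUnit_det C |>.mpr hC)).eq_iff.mp (by simpa using h))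
  have h2 := hA.dotProduct_mulVec_pos hCx
  calc (0:ℂ) < star (C *ᵥ x) ⬝ᵥ A *ᵥ (C *ᵥ x) := h2
    _ = star x ⬝ᵥ (Cᴴ * A * C) *ᵥ x := by
      rw [star_mulVec, Matrix.mulVec_mulVec, dotProduct_mulVec, Matrix.vecMul_vecMul,
        ← dotProduct_mulVec, Matrix.mul_assoc]

lemma det_real_of_posDef {n : Type*} [Fintype n] [DecidableEq n]
    {A : Matrix n n ℂ} (hA : A.PosDef) : A.det = (A.det.re : ℂ) ∧ 0 < A.det.re := by
  have h := hA.det_pos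
  rw [Complex.lt_def] at h
  exact ⟨Complex.ext rfl (by simpa using h.2.symm), by simpa using h.1⟩

open scoped MatrixOrder Matrix.Norms.L2Operator in
lemma kyfan {n : Type*} [Fintype n] [DecidableEq n]
    {A B : Matrix n n ℂ} (hA : A.PosDef) (hB : B.PosDef) {a b : ℝ}
    (ha : 0 < a) (hb : 0 < b) (hab : a + b = 1) :
    (A.det.re) ^ a * (B.det.re) ^ b ≤ (a • A + b • B).det.re := by
  classical
  set S := CFC.sqrt A with hSdef
  have hSps : S.PosSemidef := (CFC.sqrt_nonneg A).posSemidef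
  have hSH : S.IsHermitian := hSps.1
  have hSS : S * S = A := CFC.sqrt_mul_sqrt_self A hA.posSemidef.nonneg
  have hdetS : S.det * S.det = A.det := by rw [← Matrix.det_mul, hSS]
  have hSdetU : IsUnit S.det := by
    refine isUnit_of_mul_isUnit_left (y := S.det) ?_
    rw [hdetS]; exact hA.det_pos.ne'.isUnit
  have hSU : IsUnit S := (Matrix.isUnit_iff_isUnit_det S).mpr hSdetU
  have hSinvH : (S⁻¹).IsHermitian := hSH.inv
  have hSinvdetU : IsUnit (S⁻¹).det := by
    rw [Matrix.det_nonsing_inv]; exact hSdetU.ringInverse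
  set N := S⁻¹ * B * S⁻¹ with hNdef
  have hN : N.PosDef := by
    have := posDef_conj_of_isUnit (C := S⁻¹) hB hSinvdetU
    rwa [hSinvH.eq] at this
  have hBN : B = S * N * S := by
    have e : S * (S⁻¹ * B * S⁻¹) * S = (S * S⁻¹) * (B * (S⁻¹ * S)) := by
      simp only [Matrix.mul_assoc]
    rw [hNdef, e, Matrix.mul_nonsing_inv _ hSdetU, Matrix.nonsing_inv_mul _ hSdetU,
      Matrix.one_mul, Matrix.mul_one]
  have hcomb : a • A + b • B = S * (a • (1:Matrix n n ℂ) + b • N) * S := by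
    rw [Matrix.mul_add, Matrix.add_mul]
    rw [Matrix.mul_smul, Matrix.smul_mul, Matrix.mul_smul, Matrix.smul_mul,
      Matrix.mul_one, hSS, ← hBN]
  have hdet_comb : (a • A + b • B).det = A.det * (a • (1:Matrix n n ℂ) + b • N).det := by
    rw [hcomb, Matrix.det_mul, Matrix.det_mul, ← hdetS]; ring
  have hNH : N.IsHermitian := hN.1
  set μ : n → ℝ := hNH.eigenvalues with hμdef
  have hμpos : ∀ i, 0 < μ i := hN.eigenvalues_pos
  set V : Matrix n n ℂ := (hNH.eigenvectorUnitary : Matrix n n ℂ) with hVdef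
  have hVU : V * star V = 1 := (Matrix.mem_unitaryGroup_iff).mp hNH.eigenvectorUnitary.2
  have hUV : star V * V = 1 := (Matrix.mem_unitaryGroup_iff').mp hNH.eigenvectorUnitary.2
  have hspec : N = V * Matrix.diagonal (Complex.ofReal ∘ μ) * star V := hNH.spectral_theorem
  have hconj1 : a • (1:Matrix n n ℂ) + b • N
      = V * (a • (1:Matrix n n ℂ) + b • Matrix.diagonal (Complex.ofReal ∘ μ)) * star V := by
    rw [Matrix.mul_add, Matrix.add_mul, Matrix.mul_smul, Matrix.smul_mul,
      Matrix.mul_smul, Matrix.smul_mul, Matrix.mul_one, hVU, ← hspec]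
  have hdiag : a • (1:Matrix n n ℂ) + b • Matrix.diagonal (Complex.ofReal ∘ μ)
      = Matrix.diagonal (fun i => ((a + b * μ i : ℝ) : ℂ)) := by
    rw [← Matrix.diagonal_one, ← Matrix.diagonal_smul, ← Matrix.diagonal_smul,
      Matrix.diagonal_add]
    funext i
    simp [Complex.real_smul]
  have hdetN2 : (a • (1:Matrix n n ℂ) + b • N).det = ((∏ i, (a + b * μ i) : ℝ) : ℂ) := by
    rw [hconj1, Matrix.det_mul, Matrix.det_mul, mul_comm, ← mul_assoc, ← Matrix.det_mul, hUV,
      Matrix.det_one, one_mul, hdiag, Matrix.det_diagonal]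
    push_cast
    rfl
  have hdetNμ : N.det = ((∏ i, μ i : ℝ) : ℂ) := by
    rw [hNH.det_eq_prod_eigenvalues]
    push_cast
    rfl
  obtain ⟨hAre, hrpos⟩ := det_real_of_posDef hA
  set r : ℝ := A.det.re with hrdef
  have hdetB : B.det = ((r * ∏ i, μ i : ℝ) : ℂ) := by
    rw [hBN, Matrix.det_mul, Matrix.det_mul, mul_comm, ← mul_assoc, ← Matrix.det_mul, hSS,
      hAre, hdetNμ]
    push_cast
    ring
  have hdetBre : B.det.re = r * ∏ i, μ i := by rw [hdetB, Complex.ofReal_re]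
  have hdetCre : (a • A + b • B).det.re = r * ∏ i, (a + b * μ i) := by
    rw [hdet_comb, hdetN2, hAre, ← Complex.ofReal_mul, Complex.ofReal_re]
  rw [hdetBre, hdetCre]
  have hμprodpos : (0:ℝ) < ∏ i, μ i := Finset.prod_pos (fun i _ => hμpos i)
  have key : ∏ i, (μ i) ^ b ≤ ∏ i, (a + b * μ i) := by
    apply Finset.prod_le_prod
    · intro i _; exact Real.rpow_nonneg (hμpos i).le b
    · intro i _
      have := Real.geom_mean_le_arith_mean2_weighted ha.le hb.le zero_le_one (hμpos i).le hab
      simpa using this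
  calc r ^ a * (r * ∏ i, μ i) ^ b = r ^ a * (r ^ b * (∏ i, μ i) ^ b) := by
        rw [Real.mul_rpow hrpos.le hμprodpos.le]
    _ = (r ^ a * r ^ b) * (∏ i, μ i) ^ b := by ring
    _ = r * (∏ i, μ i) ^ b := by rw [← Real.rpow_add hrpos, hab, Real.rpow_one]
    _ = r * ∏ i, (μ i) ^ b := by
        rw [← Real.finset_prod_rpow _ _ (fun i _ => (hμpos i).le)]
    _ ≤ r * ∏ i, (a + b * μ i) := by
        exact mul_le_mul_of_nonneg_left key hrpos.le

lemma kyfan' {n : Type*} [Fintype n] [DecidableEq n]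
    {A B : Matrix n n ℂ} (hA : A.PosDef) (hB : B.PosDef) {a b : ℝ}
    (ha : 0 ≤ a) (hb : 0 ≤ b) (hab : a + b = 1) :
    (A.det.re) ^ a * (B.det.re) ^ b ≤ (a • A + b • B).det.re := by
  rcases ha.eq_or_lt with rfl | ha'
  · obtain rfl : b = 1 := by linarith
    simp [Real.rpow_one]
  rcases hb.eq_or_lt with rfl | hb'
  · obtain rfl : a = 1 := by linarith
    simp [Real.rpow_one]
  exact kyfan hA hB ha' hb' hab

lemma posSemidef_smul_real {n : Type*} [Fintype n] {M : Matrix n n ℂ}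
    (hM : M.PosSemidef) {c : ℝ} (hc : 0 ≤ c) : (c • M).PosSemidef := by
  have h1 : (c • M).IsHermitian := by
    show (c • M)ᴴ = c • M
    rw [Matrix.conjTranspose_smul, hM.1.eq, star_trivial]
  refine Matrix.PosSemidef.of_dotProduct_mulVec_nonneg h1 fun x => ?_
  rw [Matrix.smul_mulVec, dotProduct_smul]
  rw [Complex.real_smul]
  exact mul_nonneg (by exact_mod_cast hc) (hM.dotProduct_mulVec_nonneg x)

lemma posSemidef_vecMulVec {n : Type*} [Fintype n] (v : n → ℂ) :
    (vecMulVec v (star v)).PosSemidef := by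
  rw [Matrix.vecMulVec_eq (Fin 1), ← Matrix.conjTranspose_replicateCol]
  exact Matrix.posSemidef_self_mul_conjTranspose _

end Aux

/-- The covariance matrix `Σ_n(λ) = σ²·I + (ρ/N_S)·Σ_i λ_{n,i}·g_{n,i} g_{n,i}^*`. -/
noncomputable def covOf {NR NS : ℕ} (σ2 ρ : ℝ) (g : Fin NS → (Fin NR → ℂ))
    (lam : Fin NS → ℝ) : Matrix (Fin NR) (Fin NR) ℂ :=
  σ2 • (1 : Matrix (Fin NR) (Fin NR) ℂ)
    + (ρ / (NS : ℝ)) • ∑ i, lam i • vecMulVec (g i) (star (g i))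

lemma covOf_posDef {NR NS : ℕ} {σ2 ρ : ℝ} (hσ2 : 0 < σ2) (hρ : 0 < ρ)
    (g : Fin NS → (Fin NR → ℂ)) {lam : Fin NS → ℝ} (hlam : ∀ i, 0 ≤ lam i) :
    (covOf σ2 ρ g lam).PosDef := by
  unfold covOf
  apply Matrix.PosDef.add_posSemidef
  · have h1 : σ2 • (1 : Matrix (Fin NR) (Fin NR) ℂ)
        = Matrix.diagonal (fun _ => (σ2 : ℂ)) := by
      ext i j
      by_cases h : i = j <;>
        simp [Matrix.one_apply, Matrix.diagonal_apply, h, Complex.real_smul]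
    rw [h1]
    exact Matrix.PosDef.diagonal fun i => by exact_mod_cast hσ2
  · apply posSemidef_smul_real _ (div_nonneg hρ.le (Nat.cast_nonneg _))
    apply Finset.sum_induction _ _ (fun A B hA hB => hA.add hB)
    · exact Matrix.PosSemidef.zero
    · exact fun i _ => posSemidef_smul_real (posSemidef_vecMulVec (g i)) (hlam i)

lemma covOf_combo {NR NS : ℕ} (σ2 ρ : ℝ) (g : Fin NS → (Fin NR → ℂ))
    (u v : Fin NS → ℝ) {a b : ℝ} (hab : a + b = 1) :
    covOf σ2 ρ g (a • u + b • v) = a • covOf σ2 ρ g u + b • covOf σ2 ρ g v := by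
  unfold covOf
  obtain rfl : b = 1 - a := by linarith
  have h : ∀ i : Fin NS, (a • u + (1 - a) • v) i • vecMulVec (g i) (star (g i))
      = a • (u i • vecMulVec (g i) (star (g i)))
        + (1 - a) • (v i • vecMulVec (g i) (star (g i))) := by
    intro i
    simp only [Pi.add_apply, Pi.smul_apply, smul_eq_mul, add_smul, mul_smul, sub_smul,
      one_smul, Pi.sub_apply]
  simp only [h, Finset.sum_add_distrib, smul_add, Finset.smul_sum]
  have e1 : ∑ x : Fin NS, (ρ / (NS:ℝ)) • a • u x • vecMulVec (g x) (star (g x))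
      = ∑ x : Fin NS, a • (ρ / (NS:ℝ)) • u x • vecMulVec (g x) (star (g x)) :=
    Finset.sum_congr rfl fun i _ => smul_comm _ _ _
  have e2 : ∑ x : Fin NS, (ρ / (NS:ℝ)) • (1 - a) • v x • vecMulVec (g x) (star (g x))
      = ∑ x : Fin NS, (1 - a) • (ρ / (NS:ℝ)) • v x • vecMulVec (g x) (star (g x)) :=
    Finset.sum_congr rfl fun i _ => smul_comm _ _ _
  rw [e1, e2]
  have e3 : σ2 • (1 : Matrix (Fin NR) (Fin NR) ℂ)
      = a • σ2 • (1 : Matrix (Fin NR) (Fin NR) ℂ)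
        + (1 - a) • σ2 • (1 : Matrix (Fin NR) (Fin NR) ℂ) := by module
  conv_lhs => rw [e3]
  abel

lemma holder_sum {ι : Type*} [Fintype ι] (p q : ι → ℝ)
    (hp : ∀ t, 0 ≤ p t) (hq : ∀ t, 0 ≤ q t) {a b : ℝ}
    (ha : 0 ≤ a) (hb : 0 ≤ b) (hab : a + b = 1) :
    ∑ t, (p t) ^ a * (q t) ^ b ≤ (∑ t, p t) ^ a * (∑ t, q t) ^ b := by
  rcases ha.eq_or_lt with rfl | ha'
  · obtain rfl : b = 1 := by linarith
    simp [Real.rpow_one]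
  rcases hb.eq_or_lt with rfl | hb'
  · obtain rfl : a = 1 := by linarith
    simp [Real.rpow_one]
  have hpq : Real.HolderConjugate a⁻¹ b⁻¹ := by
    rw [Real.holderConjugate_iff]
    constructor
    · rw [lt_inv_comm₀ one_pos ha']; simpa using by linarith
    · rw [inv_inv, inv_inv]; exact hab
  have H := Real.inner_le_Lp_mul_Lq_of_nonneg Finset.univ hpq
    (f := fun t => (p t) ^ a) (g := fun t => (q t) ^ b)
    (fun t _ => Real.rpow_nonneg (hp t) a) (fun t _ => Real.rpow_nonneg (hq t) b)
  have e1 : ∀ t, ((p t) ^ a) ^ a⁻¹ = p t := fun t => by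
    rw [← Real.rpow_mul (hp t), mul_inv_cancel₀ ha'.ne', Real.rpow_one]
  have e2 : ∀ t, ((q t) ^ b) ^ b⁻¹ = q t := fun t => by
    rw [← Real.rpow_mul (hq t), mul_inv_cancel₀ hb'.ne', Real.rpow_one]
  simp only [e1, e2, one_div, inv_inv] at H
  exact H

/-- The closed-form SE lower bound `R_LB(λ)` as a function of the power
allocation vector `λ`. -/
noncomputable def RLB {NR NS M : ℕ} (σ2 ρ : ℝ)
    (g : Fin M → Fin NS → (Fin NR → ℂ)) (lam : Fin M → Fin NS → ℝ) : ℝ :=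
  Real.logb 2 M - (NR : ℝ) * Real.logb 2 (Real.exp 1 * σ2)
    - (1 / (M : ℝ)) * ∑ n, Real.logb 2
        (∑ t, (((covOf σ2 ρ (g n) (lam n)) + (covOf σ2 ρ (g t) (lam t))).det.re)⁻¹)

/-- Proposition 2: `R_LB` is a concave function of the power
allocation vector `λ` on the nonnegative orthant. -/
theorem RLB_concave (NR NS M : ℕ) (hNR : 0 < NR) (hNS : 0 < NS) (hM : 0 < M)
    (σ2 ρ : ℝ) (hσ2 : 0 < σ2) (hρ : 0 < ρ)
    (g : Fin M → Fin NS → (Fin NR → ℂ)) :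
    ConcaveOn ℝ {lam : Fin M → Fin NS → ℝ | ∀ n i, 0 ≤ lam n i}
      (RLB σ2 ρ g) := by
  classical
  set s : Set (Fin M → Fin NS → ℝ) := {lam | ∀ n i, 0 ≤ lam n i} with hs
  have hconv : Convex ℝ s := by
    intro x hx y hy a b ha hb hab
    intro n i
    have : (a • x + b • y) n i = a * x n i + b * y n i := by simp
    rw [this]
    exact add_nonneg (mul_nonneg ha (hx n i)) (mul_nonneg hb (hy n i))
  refine ⟨hconv, fun x hx y hy a b ha hb hab => ?_⟩
  -- notation
  set dd : (Fin M → Fin NS → ℝ) → Fin M → Fin M → ℝ := fun lam n t =>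
    (((covOf σ2 ρ (g n) (lam n)) + (covOf σ2 ρ (g t) (lam t))).det.re) with hdd
  set F : (Fin M → Fin NS → ℝ) → Fin M → ℝ := fun lam n => ∑ t, (dd lam n t)⁻¹ with hF
  have hPD : ∀ lam ∈ s, ∀ n t : Fin M,
      ((covOf σ2 ρ (g n) (lam n)) + (covOf σ2 ρ (g t) (lam t))).PosDef := fun lam hlam n t =>
    (covOf_posDef hσ2 hρ (g n) (hlam n)).add (covOf_posDef hσ2 hρ (g t) (hlam t))
  have hddpos : ∀ lam ∈ s, ∀ n t, 0 < dd lam n t := fun lam hlam n t =>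
    (det_real_of_posDef (hPD lam hlam n t)).2
  haveI : Nonempty (Fin M) := ⟨⟨0, hM⟩⟩
  have hFpos : ∀ lam ∈ s, ∀ n, 0 < F lam n := fun lam hlam n =>
    Finset.sum_pos (fun t _ => inv_pos.mpr (hddpos lam hlam n t)) Finset.univ_nonempty
  have hz : a • x + b • y ∈ s := hconv hx hy ha hb hab
  set z := a • x + b • y with hzdef
  -- key per-(n,t) inequality
  have hkey : ∀ n t : Fin M, (dd z n t)⁻¹ ≤ ((dd x n t)⁻¹) ^ a * ((dd y n t)⁻¹) ^ b := by
    intro n t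
    have hcombo : (covOf σ2 ρ (g n) (z n)) + (covOf σ2 ρ (g t) (z t))
        = a • ((covOf σ2 ρ (g n) (x n)) + (covOf σ2 ρ (g t) (x t)))
          + b • ((covOf σ2 ρ (g n) (y n)) + (covOf σ2 ρ (g t) (y t))) := by
      have h1 : z n = a • x n + b • y n := by simp [hzdef]
      have h2 : z t = a • x t + b • y t := by simp [hzdef]
      rw [h1, h2, covOf_combo σ2 ρ (g n) _ _ hab, covOf_combo σ2 ρ (g t) _ _ hab]
      simp only [smul_add]
      abel
    have hky := kyfan' (hPD x hx n t) (hPD y hy n t) ha hb hab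
    rw [← hcombo] at hky
    have hx' := hddpos x hx n t
    have hy' := hddpos y hy n t
    have hprodpos : 0 < (dd x n t) ^ a * (dd y n t) ^ b :=
      mul_pos (Real.rpow_pos_of_pos hx' a) (Real.rpow_pos_of_pos hy' b)
    have := inv_anti₀ hprodpos hky
    calc (dd z n t)⁻¹ ≤ ((dd x n t) ^ a * (dd y n t) ^ b)⁻¹ := this
      _ = ((dd x n t)⁻¹) ^ a * ((dd y n t)⁻¹) ^ b := by
        rw [mul_inv, ← Real.inv_rpow hx'.le, ← Real.inv_rpow hy'.le]
  -- per-n inequality on F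
  have hFle : ∀ n, F z n ≤ (F x n) ^ a * (F y n) ^ b := by
    intro n
    calc F z n ≤ ∑ t, ((dd x n t)⁻¹) ^ a * ((dd y n t)⁻¹) ^ b :=
          Finset.sum_le_sum fun t _ => hkey n t
      _ ≤ (∑ t, (dd x n t)⁻¹) ^ a * (∑ t, (dd y n t)⁻¹) ^ b :=
          holder_sum _ _ (fun t => (inv_pos.mpr (hddpos x hx n t)).le)
            (fun t => (inv_pos.mpr (hddpos y hy n t)).le) ha hb hab
  -- logb per n
  have hlogb : ∀ n, Real.logb 2 (F z n)
      ≤ a * Real.logb 2 (F x n) + b * Real.logb 2 (F y n) := by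
    intro n
    have h1 : Real.logb 2 (F z n) ≤ Real.logb 2 ((F x n) ^ a * (F y n) ^ b) :=
      Real.logb_le_logb_of_le one_lt_two (hFpos z hz n) (hFle n)
    have h2 : Real.logb 2 ((F x n) ^ a * (F y n) ^ b)
        = a * Real.logb 2 (F x n) + b * Real.logb 2 (F y n) := by
      rw [Real.logb_mul (Real.rpow_pos_of_pos (hFpos x hx n) a).ne'
        (Real.rpow_pos_of_pos (hFpos y hy n) b).ne',
        Real.logb_rpow_eq_mul_logb_of_pos (hFpos x hx n),
        Real.logb_rpow_eq_mul_logb_of_pos (hFpos y hy n)]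
    linarith
  have hsum : ∑ n, Real.logb 2 (F z n)
      ≤ a * ∑ n, Real.logb 2 (F x n) + b * ∑ n, Real.logb 2 (F y n) := by
    calc ∑ n, Real.logb 2 (F z n)
        ≤ ∑ n, (a * Real.logb 2 (F x n) + b * Real.logb 2 (F y n)) :=
          Finset.sum_le_sum fun n _ => hlogb n
      _ = a * ∑ n, Real.logb 2 (F x n) + b * ∑ n, Real.logb 2 (F y n) := by
          rw [Finset.sum_add_distrib, Finset.mul_sum, Finset.mul_sum]
  -- assemble
  have hc : (0:ℝ) ≤ 1 / (M:ℝ) := by positivity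
  set C : ℝ := Real.logb 2 M - (NR : ℝ) * Real.logb 2 (Real.exp 1 * σ2) with hC
  have hRLB : ∀ lam, RLB σ2 ρ g lam = C - (1 / (M:ℝ)) * ∑ n, Real.logb 2 (F lam n) := by
    intro lam
    rfl
  rw [smul_eq_mul, smul_eq_mul, hRLB, hRLB, hRLB]
  set Sx := ∑ n, Real.logb 2 (F x n)
  set Sy := ∑ n, Real.logb 2 (F y n)
  set Sz := ∑ n, Real.logb 2 (F z n)
  have h1 : (1 / (M:ℝ)) * Sz ≤ (1 / (M:ℝ)) * (a * Sx + b * Sy) :=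
    mul_le_mul_of_nonneg_left hsum hc
  have h2 : a * (C - (1 / (M:ℝ)) * Sx) + b * (C - (1 / (M:ℝ)) * Sy)
      = C - (1 / (M:ℝ)) * (a * Sx + b * Sy) := by
    linear_combination C * hab
  linarith
end

section
/- (Proposition 1, high-SNR limit.) Let N_R, N_S, M be positive integers with 2·N_S ≤ N_R, let σ² > 0, and let G₁, …, G_M ∈ ℂ^{N_R×N_S} be matrices such that each G_n has rank N_S and such that for every pair n ≠ t the concatenated matrix [G_n, G_t] ∈ ℂ^{N_R×2N_S} has rank 2·N_S. For ρ > 0 define Σ_n(ρ) = σ²·I_{N_R} + (ρ/N_S)·G_n G_n^* and I_LB(ρ) = log₂ M − N_R·log₂ e − (1/M) Σ_{n=1}^M log₂ ( Σ_{t=1}^M det Σ_n(ρ) / det(Σ_n(ρ) + Σ_t(ρ)) ). Then lim_{ρ → ∞} I_LB(ρ) = log₂ M + N_R·(1 − log₂ e). -/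
open Matrix Real Filter
open scoped ComplexOrder Topology

lemma det_re_shift {N : ℕ} (A : Matrix (Fin N) (Fin N) ℂ) (hA : A.IsHermitian) (a c : ℝ) :
    (a • (1 : Matrix (Fin N) (Fin N) ℂ) + c • A).det.re
      = ∏ i, (c * hA.eigenvalues i + a) := by
  set U : Matrix (Fin N) (Fin N) ℂ := (hA.eigenvectorUnitary : Matrix (Fin N) (Fin N) ℂ) with hUdef
  have hU : U * star U = 1 := (Matrix.mem_unitaryGroup_iff).mp hA.eigenvectorUnitary.2
  have key : a • (1 : Matrix (Fin N) (Fin N) ℂ) + c • A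
      = U * diagonal (fun i => ((c * hA.eigenvalues i + a : ℝ) : ℂ)) * star U := by
    have hdiag : diagonal (fun i => ((c * hA.eigenvalues i + a : ℝ) : ℂ))
        = a • (1 : Matrix (Fin N) (Fin N) ℂ)
          + c • diagonal (RCLike.ofReal ∘ hA.eigenvalues) := by
      ext i j
      rcases eq_or_ne i j with h | h <;>
        simp [h, Matrix.diagonal_apply, Matrix.one_apply, Complex.real_smul] <;>
          push_cast <;> ring
    rw [hdiag, mul_add, add_mul, Matrix.mul_smul, Matrix.mul_smul, mul_one,
      Matrix.smul_mul, Matrix.smul_mul, hU, hUdef, ← Unitary.conjStarAlgAut_apply (S := ℂ), ← hA.spectral_theorem]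
  rw [key, det_mul, det_mul, mul_right_comm, ← det_mul, hU, det_one, one_mul,
    det_diagonal, ← Complex.ofReal_prod, Complex.ofReal_re]

open Polynomial in
lemma degree_prod_linear {N : ℕ} (a : ℝ) (ha : a ≠ 0) (b : Fin N → ℝ) :
    (∏ i, (C (b i) * X + C a)).degree = (Fintype.card {i // b i ≠ 0} : WithBot ℕ) := by
  rw [Polynomial.degree_prod]
  have h1 : ∀ i, (C (b i) * X + C a).degree
      = ((if b i ≠ 0 then 1 else 0 : ℕ) : WithBot ℕ) := by
    intro i
    by_cases h : b i = 0
    · simp [h, Polynomial.degree_C ha]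
    · simp [h, Polynomial.degree_linear h]
  simp_rw [h1]
  rw [← Nat.cast_sum, Finset.sum_boole, Fintype.card_subtype]
  simp

open Polynomial in
lemma eval_prod_linear {N : ℕ} (a x : ℝ) (b : Fin N → ℝ) :
    (∏ i, (C (b i) * X + C a)).eval x = ∏ i, (b i * x + a) := by
  simp [Polynomial.eval_prod]


/-- Proposition 1, high-SNR limit: with `2·N_S ≤ N_R`,
`Σ_n(ρ) = σ²·I + (ρ/N_S)·G_n G_n^*`, each `G_n` of rank `N_S` and every
concatenation `[G_n, G_t]` (for `n ≠ t`) of rank `2·N_S`, the closed-form bound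
`I_LB(ρ) = log₂ M − N_R·log₂ e − (1/M)·Σ_n log₂(Σ_t det Σ_n(ρ)/det(Σ_n(ρ)+Σ_t(ρ)))`
satisfies `lim_{ρ→∞} I_LB(ρ) = log₂ M + N_R·(1 − log₂ e)`. -/
theorem ILB_high_SNR_limit (NR NS M : ℕ)
    (hNR : 0 < NR) (hNS : 0 < NS) (hM : 0 < M) (hdim : 2 * NS ≤ NR)
    (σ2 : ℝ) (hσ2 : 0 < σ2)
    (G : Fin M → Matrix (Fin NR) (Fin NS) ℂ)
    (hrank : ∀ n, (G n).rank = NS)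
    (hrank2 : ∀ n t, n ≠ t → (Matrix.fromCols (G n) (G t)).rank = 2 * NS)
    (Sig : Fin M → ℝ → Matrix (Fin NR) (Fin NR) ℂ)
    (hSig : ∀ n ρ, Sig n ρ = σ2 • (1 : Matrix (Fin NR) (Fin NR) ℂ)
        + (ρ / (NS : ℝ)) • (G n * (G n)ᴴ)) :
    Tendsto (fun ρ : ℝ =>
        Real.logb 2 M - (NR : ℝ) * Real.logb 2 (Real.exp 1)
          - (1 / (M : ℝ)) * ∑ n, Real.logb 2
              (∑ t, (Sig n ρ).det.re / ((Sig n ρ) + (Sig t ρ)).det.re))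
      atTop
      (𝓝 (Real.logb 2 M + (NR : ℝ) * (1 - Real.logb 2 (Real.exp 1)))) := by
  classical
  have hNSR : (NS : ℝ) ≠ 0 := Nat.cast_ne_zero.mpr hNS.ne'
  have hPSD : ∀ n, (G n * (G n)ᴴ).PosSemidef := fun n =>
    Matrix.posSemidef_self_mul_conjTranspose _
  -- numerator polynomial
  let p : Fin M → Polynomial ℝ := fun n =>
    ∏ i, (Polynomial.C ((hPSD n).1.eigenvalues i / NS) * Polynomial.X + Polynomial.C σ2)
  have hnum : ∀ n ρ, (Sig n ρ).det.re = (p n).eval ρ := by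
    intro n ρ
    rw [hSig, det_re_shift _ (hPSD n).1 σ2 (ρ / NS), eval_prod_linear]
    exact Finset.prod_congr rfl fun i _ => by ring
  have hdegp : ∀ n, (p n).degree = (NS : WithBot ℕ) := by
    intro n
    rw [degree_prod_linear _ hσ2.ne' _]
    congr 1
    have hiff : ∀ i : Fin NR,
        ((hPSD n).1.eigenvalues i / NS ≠ 0) ↔ ((hPSD n).1.eigenvalues i ≠ 0) := fun i => by
      rw [div_ne_zero_iff]
      exact ⟨fun h => h.1, fun h => ⟨h, hNSR⟩⟩
    rw [Fintype.card_congr (Equiv.subtypeEquivRight hiff),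
      ← (hPSD n).1.rank_eq_card_non_zero_eigs, Matrix.rank_self_mul_conjTranspose, hrank n]
  -- off-diagonal ratios tend to 0
  have hratio0 : ∀ n t, n ≠ t →
      Tendsto (fun ρ => (Sig n ρ).det.re / ((Sig n ρ) + (Sig t ρ)).det.re) atTop (𝓝 0) := by
    intro n t hnt
    have hPSDB : (Matrix.fromCols (G n) (G t) * (Matrix.fromCols (G n) (G t))ᴴ).PosSemidef :=
      Matrix.posSemidef_self_mul_conjTranspose _
    set q : Polynomial ℝ :=
      ∏ i, (Polynomial.C (hPSDB.1.eigenvalues i / NS) * Polynomial.X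
        + Polynomial.C (σ2 + σ2)) with hq
    have hFmul : Matrix.fromCols (G n) (G t) * (Matrix.fromCols (G n) (G t))ᴴ
        = G n * (G n)ᴴ + G t * (G t)ᴴ := by
      rw [Matrix.conjTranspose_fromCols_eq_fromRows_conjTranspose,
        Matrix.fromCols_mul_fromRows]
    have hden : ∀ ρ, ((Sig n ρ) + (Sig t ρ)).det.re = q.eval ρ := by
      intro ρ
      have hsum : Sig n ρ + Sig t ρ
          = (σ2 + σ2) • (1 : Matrix (Fin NR) (Fin NR) ℂ)
            + (ρ / NS) • (Matrix.fromCols (G n) (G t) * (Matrix.fromCols (G n) (G t))ᴴ) := by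
        rw [hSig, hSig, hFmul, add_smul, smul_add]
        abel
      rw [hsum, det_re_shift _ hPSDB.1, hq, eval_prod_linear]
      exact Finset.prod_congr rfl fun i _ => by ring
    have hdegq : q.degree = ((2 * NS : ℕ) : WithBot ℕ) := by
      rw [hq, degree_prod_linear _ (by positivity) _]
      congr 1
      have hiff : ∀ i : Fin NR,
          (hPSDB.1.eigenvalues i / NS ≠ 0) ↔ (hPSDB.1.eigenvalues i ≠ 0) := fun i => by
        rw [div_ne_zero_iff]
        exact ⟨fun h => h.1, fun h => ⟨h, hNSR⟩⟩
      rw [Fintype.card_congr (Equiv.subtypeEquivRight hiff),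
        ← hPSDB.1.rank_eq_card_non_zero_eigs, Matrix.rank_self_mul_conjTranspose,
        hrank2 n t hnt]
    have hdeg : (p n).degree < q.degree := by
      rw [hdegp n, hdegq]
      exact_mod_cast (by omega : NS < 2 * NS)
    have H := Polynomial.div_tendsto_zero_of_degree_lt (p n) q hdeg
    refine H.congr fun ρ => ?_
    rw [hnum n ρ, hden ρ]
  -- diagonal ratio is eventually constant
  have hratio1 : ∀ n,
      Tendsto (fun ρ => (Sig n ρ).det.re / ((Sig n ρ) + (Sig n ρ)).det.re) atTop
        (𝓝 (((2 : ℝ) ^ NR)⁻¹)) := by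
    intro n
    apply Tendsto.congr' _ (tendsto_const_nhds (x := ((2 : ℝ) ^ NR)⁻¹))
    filter_upwards [eventually_ge_atTop (0 : ℝ)] with ρ hρ
    have hpos : 0 < (Sig n ρ).det.re := by
      rw [hSig, det_re_shift _ (hPSD n).1]
      apply Finset.prod_pos
      intro i _
      have hev := (hPSD n).eigenvalues_nonneg i
      have h1 : 0 ≤ ρ / NS * (hPSD n).1.eigenvalues i := by positivity
      linarith
    have hden : ((Sig n ρ) + (Sig n ρ)).det.re = 2 ^ NR * (Sig n ρ).det.re := by
      have h2 : Sig n ρ + Sig n ρ = (((2 : ℝ) : ℂ)) • Sig n ρ := by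
        ext i j
        simp [Matrix.add_apply, Matrix.smul_apply]
        ring
      rw [h2, Matrix.det_smul, Fintype.card_fin, ← Complex.ofReal_pow,
        Complex.re_ofReal_mul]
    rw [hden, eq_div_iff (mul_pos (by positivity) hpos).ne']
    field_simp
  -- the inner sum tends to 2^{-NR}
  have hSsum : ∀ n,
      Tendsto (fun ρ => ∑ t, (Sig n ρ).det.re / ((Sig n ρ) + (Sig t ρ)).det.re) atTop
        (𝓝 (((2 : ℝ) ^ NR)⁻¹)) := by
    intro n
    have key := tendsto_finset_sum (Finset.univ : Finset (Fin M))
      (f := fun t (ρ : ℝ) => (Sig n ρ).det.re / ((Sig n ρ) + (Sig t ρ)).det.re)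
      (a := fun t => if t = n then ((2 : ℝ) ^ NR)⁻¹ else 0)
      (fun t _ => by
        by_cases h : t = n
        · subst h; simpa using hratio1 t
        · simpa [h] using hratio0 n t (Ne.symm h))
    simpa using key
  -- the log of the inner sum tends to -NR
  have hlog : ∀ n,
      Tendsto (fun ρ => Real.logb 2
          (∑ t, (Sig n ρ).det.re / ((Sig n ρ) + (Sig t ρ)).det.re)) atTop
        (𝓝 (-(NR : ℝ))) := by
    intro n
    have hv : Real.logb 2 (((2 : ℝ) ^ NR)⁻¹) = -(NR : ℝ) := by
      rw [Real.logb_inv, Real.logb_pow, Real.logb_self_eq_one (by norm_num)]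
      ring
    have hcont := (Real.continuousAt_logb (b := 2) (x := ((2 : ℝ) ^ NR)⁻¹)
      (by positivity)).tendsto
    have := hcont.comp (hSsum n)
    simpa [Function.comp_def, hv] using this
  have hsum : Tendsto (fun ρ => ∑ n, Real.logb 2
        (∑ t, (Sig n ρ).det.re / ((Sig n ρ) + (Sig t ρ)).det.re)) atTop
      (𝓝 (∑ _n : Fin M, -(NR : ℝ))) :=
    tendsto_finset_sum _ (fun n _ => hlog n)
  have hMne : (M : ℝ) ≠ 0 := Nat.cast_ne_zero.mpr hM.ne'
  have hval : Real.logb 2 M + (NR : ℝ) * (1 - Real.logb 2 (Real.exp 1))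
      = Real.logb 2 M - (NR : ℝ) * Real.logb 2 (Real.exp 1)
        - (1 / (M : ℝ)) * (∑ _n : Fin M, -(NR : ℝ)) := by
    simp only [Finset.sum_const, Finset.card_univ, Fintype.card_fin, nsmul_eq_mul]
    field_simp
    ring
  rw [hval]
  exact tendsto_const_nhds.sub (hsum.const_mul _)
end

section
/- Let N be a positive integer, let σ² > 0, and let P, Q ∈ ℂ^{N×N} be Hermitian positive semidefinite matrices with rank P < rank(P + Q). Then the ratio of determinants det(σ²·I_N + ρ·P) / det(2σ²·I_N + ρ·(P + Q)) tends to 0 as ρ → ∞. -/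
open Matrix Real Filter
open scoped ComplexOrder Topology

private lemma det_aux {N : ℕ} (A : Matrix (Fin N) (Fin N) ℂ) (hA : A.IsHermitian)
    (c ρ : ℝ) :
    (c • (1 : Matrix (Fin N) (Fin N) ℂ) + ρ • A).det
      = ((∏ i, (c + ρ * hA.eigenvalues i) : ℝ) : ℂ) := by
  set U := (hA.eigenvectorUnitary : Matrix (Fin N) (Fin N) ℂ) with hUdef
  have hU : U * star U = 1 := mem_unitaryGroup_iff.mp hA.eigenvectorUnitary.2
  have hdiag : Matrix.diagonal (fun i => ((c : ℂ) + ρ * hA.eigenvalues i))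
      = c • (1 : Matrix (Fin N) (Fin N) ℂ)
        + ρ • Matrix.diagonal (RCLike.ofReal ∘ hA.eigenvalues) := by
    ext i j
    by_cases h : i = j <;>
      simp [Matrix.diagonal_apply, Matrix.one_apply, h, Complex.real_smul]
  have key : c • (1 : Matrix (Fin N) (Fin N) ℂ) + ρ • A
      = U * Matrix.diagonal (fun i => ((c : ℂ) + ρ * hA.eigenvalues i)) * star U := by
    rw [hdiag, Matrix.mul_add, Matrix.add_mul, Matrix.mul_smul, Matrix.mul_smul,
      Matrix.smul_mul, Matrix.smul_mul, Matrix.mul_one, hU, ← Unitary.conjStarAlgAut_apply (S := ℂ), ← hA.spectral_theorem]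
  rw [key, Matrix.det_mul, Matrix.det_mul, mul_comm (det U), mul_assoc, ← Matrix.det_mul,
    hU, Matrix.det_one, mul_one, Matrix.det_diagonal]
  push_cast
  rfl

private lemma deg_aux {n : ℕ} (c : ℝ) (hc : c ≠ 0) (lam : Fin n → ℝ) :
    (∏ i, (Polynomial.C (lam i) * Polynomial.X + Polynomial.C c)).natDegree
      = Fintype.card {i // lam i ≠ 0} := by
  rw [Polynomial.natDegree_prod]
  · rw [Fintype.card_subtype]
    rw [Finset.card_eq_sum_ones, Finset.sum_filter]
    refine Finset.sum_congr rfl fun i _ => ?_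
    by_cases h : lam i = 0
    · simp [h]
    · rw [Polynomial.natDegree_linear h, if_pos h]
  · intro i _
    intro hzero
    apply hc
    simpa using congrArg (Polynomial.eval 0) hzero

/-- for Hermitian positive semidefinite `P, Q` with
`rank P < rank (P + Q)`, the ratio
`det(σ²·I + ρ·P) / det(2σ²·I + ρ·(P + Q))` tends to `0` as `ρ → ∞`. -/
theorem det_ratio_tendsto_zero (N : ℕ) (hN : 0 < N) (σ2 : ℝ) (hσ2 : 0 < σ2)
    (P Q : Matrix (Fin N) (Fin N) ℂ)
    (hP : P.PosSemidef) (hQ : Q.PosSemidef)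
    (hrank : P.rank < (P + Q).rank) :
    Tendsto (fun ρ : ℝ =>
        (σ2 • (1 : Matrix (Fin N) (Fin N) ℂ) + ρ • P).det.re
          / ((2 * σ2) • (1 : Matrix (Fin N) (Fin N) ℂ) + ρ • (P + Q)).det.re)
      atTop (𝓝 0) := by
  have hPQ : (P + Q).PosSemidef := hP.add hQ
  set lamP := hP.1.eigenvalues with hlamP
  set lamS := hPQ.1.eigenvalues with hlamS
  set p : Polynomial ℝ := ∏ i, (Polynomial.C (lamP i) * Polynomial.X + Polynomial.C σ2)
    with hp
  set q : Polynomial ℝ :=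
    ∏ i, (Polynomial.C (lamS i) * Polynomial.X + Polynomial.C (2 * σ2)) with hq
  have hdeg : p.degree < q.degree := by
    apply Polynomial.degree_lt_degree
    rw [hp, hq, deg_aux σ2 hσ2.ne' lamP, deg_aux (2 * σ2) (by positivity) lamS,
      ← hP.1.rank_eq_card_non_zero_eigs, ← hPQ.1.rank_eq_card_non_zero_eigs]
    exact hrank
  have hmain := Polynomial.div_tendsto_zero_of_degree_lt p q hdeg
  have heq : (fun ρ : ℝ =>
        (σ2 • (1 : Matrix (Fin N) (Fin N) ℂ) + ρ • P).det.re
          / ((2 * σ2) • (1 : Matrix (Fin N) (Fin N) ℂ) + ρ • (P + Q)).det.re)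
      = fun ρ : ℝ => p.eval ρ / q.eval ρ := by
    funext ρ
    rw [det_aux P hP.1 σ2 ρ, det_aux (P + Q) hPQ.1 (2 * σ2) ρ, Complex.ofReal_re,
      Complex.ofReal_re, hp, hq, Polynomial.eval_prod, Polynomial.eval_prod]
    congr 1
    · exact Finset.prod_congr rfl fun i _ => by simp; ring
    · exact Finset.prod_congr rfl fun i _ => by simp; ring
  rw [heq]
  exact hmain
end
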